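/- Let V be a real normed vector space, K ≥ 1, and N ≥ 1. Let f_1, …, f_N : V → ℝ be functions such that each f_j is L_j-Lipschitz with L_j ≥ 0, and set L = (1/N)·Σ_{j=1}^N L_j. Let θ^train : Δ^K → V be an arbitrary map, let θ_0, …, θ_K ∈ V and θ'_0, …, θ'_K ∈ V, and for α in the standard simplex Δ^K ⊂ ℝ^{K+1} define θ^M(α) = Σ_{i=0}^K α_i·θ_i, θ̂(α) = Σ_{i=0}^K α_i·θ'_i, F(α) = (1/N)·Σ_{j=1}^N f_j(θ^train(α)), F̂(α) = (1/N)·Σ_{j=1}^N f_j(θ̂(α)). Let R : Δ^K → ℝ be any function, and set J(α) = F(α) + R(α) and Ĵ(α) = F̂(α) + R(α). Suppose δ_LMC ≥ 0 satisfies ‖θ^train(α) − θ^M(α)‖ ≤ δ_LMC for all α ∈ Δ^K, set Δ_LoRA = max_{0 ≤ i ≤ K} ‖θ_i − θ'_i‖, and suppose α* ∈ Δ^K globally minimizes J over Δ^K and α̂ ∈ Δ^K globally minimizes Ĵ over Δ^K. Then J(α̂) − J(α*) ≤ 2·L·(δ_LMC + Δ_LoRA). -/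
import Mathlib


/-- **Composite OP-Mix suboptimality bound.**
Combining the performance gap theorem with the LoRA and merging approximation bounds:
with `L = (1/N) ∑ j, Lc j`, linearity gap `δ_LMC`, LoRA gap `Δ_LoRA = max_i ‖θ i − θ' i‖`,
`J = F + R` minimized at `α*` and `Ĵ = F̂ + R` minimized at `α̂` over the standard simplex,
we have `J(α̂) − J(α*) ≤ 2 L (δ_LMC + Δ_LoRA)`. -/
theorem opmix_composite_bound
    (V : Type*) [NormedAddCommGroup V] [NormedSpace ℝ V]
    (K N : ℕ) (hK : 1 ≤ K) (hN : 1 ≤ N)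
    (θtrain : (Fin (K + 1) → ℝ) → V)
    (θ θ' : Fin (K + 1) → V)
    (f : Fin N → V → ℝ) (Lc : Fin N → ℝ) (hLc : ∀ j, 0 ≤ Lc j)
    (hLip : ∀ j, ∀ x y : V, |f j x - f j y| ≤ Lc j * ‖x - y‖)
    (L : ℝ) (hL : L = (1 / (N : ℝ)) * ∑ j, Lc j)
    (F Fhat : (Fin (K + 1) → ℝ) → ℝ)
    (hF : ∀ α, F α = (1 / (N : ℝ)) * ∑ j, f j (θtrain α))
    (hFhat : ∀ α, Fhat α = (1 / (N : ℝ)) * ∑ j, f j (∑ i, α i • θ' i))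
    (R : (Fin (K + 1) → ℝ) → ℝ)
    (J Jhat : (Fin (K + 1) → ℝ) → ℝ)
    (hJ : ∀ α, J α = F α + R α)
    (hJhat : ∀ α, Jhat α = Fhat α + R α)
    (δLMC : ℝ) (hδ : 0 ≤ δLMC)
    (hgap : ∀ α ∈ stdSimplex ℝ (Fin (K + 1)), ‖θtrain α - ∑ i, α i • θ i‖ ≤ δLMC)
    (ΔLoRA : ℝ)
    (hΔ : ΔLoRA = Finset.univ.sup' Finset.univ_nonempty (fun i => ‖θ i - θ' i‖))
    (αstar αhat : Fin (K + 1) → ℝ)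
    (hαstar : αstar ∈ stdSimplex ℝ (Fin (K + 1)))
    (hαhat : αhat ∈ stdSimplex ℝ (Fin (K + 1)))
    (hmin : ∀ α ∈ stdSimplex ℝ (Fin (K + 1)), J αstar ≤ J α)
    (hminhat : ∀ α ∈ stdSimplex ℝ (Fin (K + 1)), Jhat αhat ≤ Jhat α) :
    J αhat - J αstar ≤ 2 * L * (δLMC + ΔLoRA) := by
  have hNpos : (0:ℝ) < N := by exact_mod_cast hN
  have key : ∀ α ∈ stdSimplex ℝ (Fin (K + 1)), |J α - Jhat α| ≤ L * (δLMC + ΔLoRA) := by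
    intro α hα
    have hdist : ‖θtrain α - ∑ i, α i • θ' i‖ ≤ δLMC + ΔLoRA := by
      have h2 : ‖(∑ i, α i • θ i) - ∑ i, α i • θ' i‖ ≤ ΔLoRA := by
        rw [← Finset.sum_sub_distrib]
        calc ‖∑ i, (α i • θ i - α i • θ' i)‖ ≤ ∑ i, ‖α i • θ i - α i • θ' i‖ :=
              norm_sum_le _ _
          _ = ∑ i, α i * ‖θ i - θ' i‖ := by
              refine Finset.sum_congr rfl fun i _ => ?_
              rw [← smul_sub, norm_smul, Real.norm_eq_abs, abs_of_nonneg (hα.1 i)]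
          _ ≤ ∑ i, α i * ΔLoRA := Finset.sum_le_sum fun i _ =>
              mul_le_mul_of_nonneg_left
                (by rw [hΔ]; exact Finset.le_sup' (fun i => ‖θ i - θ' i‖) (Finset.mem_univ i)) (hα.1 i)
          _ = ΔLoRA := by rw [← Finset.sum_mul, hα.2, one_mul]
      calc ‖θtrain α - ∑ i, α i • θ' i‖
          = ‖(θtrain α - ∑ i, α i • θ i) + ((∑ i, α i • θ i) - ∑ i, α i • θ' i)‖ := by
            rw [sub_add_sub_cancel]
        _ ≤ ‖θtrain α - ∑ i, α i • θ i‖ + ‖(∑ i, α i • θ i) - ∑ i, α i • θ' i‖ :=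
            norm_add_le _ _
        _ ≤ δLMC + ΔLoRA := add_le_add (hgap α hα) h2
    have hFgap : |F α - Fhat α| ≤ L * (δLMC + ΔLoRA) := by
      rw [hF, hFhat, ← mul_sub, ← Finset.sum_sub_distrib, abs_mul,
        abs_of_nonneg (by positivity : (0:ℝ) ≤ 1 / (N:ℝ))]
      calc (1 / (N:ℝ)) * |∑ j, (f j (θtrain α) - f j (∑ i, α i • θ' i))|
          ≤ (1 / (N:ℝ)) * ∑ j, |f j (θtrain α) - f j (∑ i, α i • θ' i)| := by
            gcongr
            exact Finset.abs_sum_le_sum_abs _ _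
        _ ≤ (1 / (N:ℝ)) * ∑ j, Lc j * (δLMC + ΔLoRA) := by
            gcongr with j
            exact le_trans (hLip j _ _) (mul_le_mul_of_nonneg_left hdist (hLc j))
        _ = L * (δLMC + ΔLoRA) := by rw [hL, ← Finset.sum_mul]; ring
    calc |J α - Jhat α| = |F α - Fhat α| := by rw [hJ, hJhat]; ring_nf
      _ ≤ L * (δLMC + ΔLoRA) := hFgap
  have h1 := abs_le.1 (key αhat hαhat)
  have h2 := abs_le.1 (key αstar hαstar)
  have h3 := hminhat αstar hαstar
  linarith [h1.1, h1.2, h2.1, h2.2]
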